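/- Let S ⊆ ℤ^n be an integrally convex set and let B ⊆ ℤ^n be an integer interval, i.e., B = { x ∈ ℤ^n : a_i ≤ x_i ≤ b_i for all i } for some a ∈ (ℤ ∪ {−∞})^n and b ∈ (ℤ ∪ {+∞})^n with a ≤ b. Then the Minkowski sum S + B = { y + z : y ∈ S, z ∈ B } is an integrally convex set. -/

import Mathlib

open scoped BigOperators Pointwise

noncomputable section

variable {ι : Type*} [Fintype ι]

/-- Embedding of integer vectors into real vectors. -/
def embedZ (z : ι → ℤ) : ι → ℝ := fun i => (z i : ℝ)

/-- The integral neighborhood `N(x)` of a real vector `x`. -/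
def IntNbhd (x : ι → ℝ) : Set (ι → ℤ) := {z | ∀ i, |x i - (z i : ℝ)| < 1}

/-- A set `S ⊆ ℤ^ι` is integrally convex if every point `x` of its convex hull
belongs to the convex hull of `S ∩ N(x)`. -/
def IntegrallyConvexSet (S : Set (ι → ℤ)) : Prop :=
  ∀ x ∈ convexHull ℝ (embedZ '' S), x ∈ convexHull ℝ (embedZ '' (S ∩ IntNbhd x))

/-- The local convex extension `f̃` of `f : ℤ^ι → ℝ ∪ {+∞}`. -/
def LocalConvexExt (f : (ι → ℤ) → EReal) (x : ι → ℝ) : EReal :=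
  sInf {v : EReal | ∃ (A : Finset (ι → ℤ)) (lam : (ι → ℤ) → ℝ),
    (∀ z ∈ A, z ∈ IntNbhd x) ∧ (∀ z ∈ A, 0 ≤ lam z) ∧
    (∑ z ∈ A, lam z) = 1 ∧ (∀ i, (∑ z ∈ A, lam z * (z i : ℝ)) = x i) ∧
    v = ∑ z ∈ A, ((lam z : EReal) * f z)}

/-- A function `f : ℤ^ι → ℝ ∪ {+∞}` is integrally convex if its local convex
extension is a convex function on `ℝ^ι`. -/
def IntegrallyConvexFn (f : (ι → ℤ) → EReal) : Prop :=
  ∀ x y : ι → ℝ, ∀ a b : ℝ, 0 ≤ a → 0 ≤ b → a + b = 1 →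
    LocalConvexExt f (a • x + b • y) ≤
      (a : EReal) * LocalConvexExt f x + (b : EReal) * LocalConvexExt f y

/-- Componentwise rounded-up midpoint `⌈(x+y)/2⌉` of two integer vectors. -/
def midUp (x y : ι → ℤ) : ι → ℤ := fun i => ⌈((x i + y i : ℤ) : ℚ) / 2⌉

/-- Componentwise rounded-down midpoint `⌊(x+y)/2⌋` of two integer vectors. -/
def midDown (x y : ι → ℤ) : ι → ℤ := fun i => ⌊((x i + y i : ℤ) : ℚ) / 2⌋

/-- A set `S ⊆ ℤ^ι` is discrete midpoint convex if for all `x, y ∈ S` with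
`‖x - y‖∞ ≥ 2`, both `⌈(x+y)/2⌉` and `⌊(x+y)/2⌋` belong to `S`. -/
def DiscreteMidpointConvexSet (S : Set (ι → ℤ)) : Prop :=
  ∀ x ∈ S, ∀ y ∈ S, (∃ i, 2 ≤ |x i - y i|) → midUp x y ∈ S ∧ midDown x y ∈ S

/-- Globally discrete midpoint convex function: discrete midpoint convexity for
all pairs with `‖x - y‖∞ ≥ 2`. -/
def GloballyDMC (f : (ι → ℤ) → EReal) : Prop :=
  ∀ x y : ι → ℤ, (∃ i, 2 ≤ |x i - y i|) →
    f (midUp x y) + f (midDown x y) ≤ f x + f y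

/-- Locally discrete midpoint convex function: effective domain is a discrete
midpoint convex set, and discrete midpoint convexity holds whenever `‖x - y‖∞ = 2`. -/
def LocallyDMC (f : (ι → ℤ) → EReal) : Prop :=
  DiscreteMidpointConvexSet {x | f x ≠ ⊤} ∧
  ∀ x y : ι → ℤ, (∀ i, |x i - y i| ≤ 2) → (∃ i, |x i - y i| = 2) →
    f (midUp x y) + f (midDown x y) ≤ f x + f y

/-- An integer interval (box) `B = [a, b] ∩ ℤ^ι` with bounds
`a ∈ (ℤ ∪ {-∞})^ι`, `b ∈ (ℤ ∪ {+∞})^ι`, `a ≤ b`. -/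
def IsIntegerInterval (B : Set (ι → ℤ)) : Prop :=
  ∃ a b : ι → EReal,
    (∀ i, a i = ⊥ ∨ ∃ k : ℤ, a i = ((k : ℝ) : EReal)) ∧
    (∀ i, b i = ⊤ ∨ ∃ k : ℤ, b i = ((k : ℝ) : EReal)) ∧
    (∀ i, a i ≤ b i) ∧
    B = {x | ∀ i, a i ≤ ((x i : ℝ) : EReal) ∧ ((x i : ℝ) : EReal) ≤ b i}

/-- Separable convex function: a sum of univariate discrete convex functions. -/
def SeparableConvex (φ : (ι → ℤ) → EReal) : Prop :=
  ∃ φi : ι → ℤ → EReal,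
    (∀ i t, φi i t ≠ ⊥) ∧
    (∀ i t, 2 * φi i t ≤ φi i (t - 1) + φi i (t + 1)) ∧
    (∀ x, φ x = ∑ i, φi i (x i))

set_option linter.unusedSectionVars false

theorem embedZ_add (y z : ι → ℤ) : embedZ (y + z) = embedZ y + embedZ z := by
  funext i; simp [embedZ]

theorem embedZ_image_add (A B : Set (ι → ℤ)) :
    embedZ '' (A + B) = embedZ '' A + embedZ '' B := by
  ext v
  constructor
  · rintro ⟨w, ⟨a, ha, b, hb, rfl⟩, rfl⟩
    exact ⟨embedZ a, ⟨a, ha, rfl⟩, embedZ b, ⟨b, hb, rfl⟩, (embedZ_add a b).symm⟩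
  · rintro ⟨-, ⟨a, ha, rfl⟩, -, ⟨b, hb, rfl⟩, rfl⟩
    exact ⟨a + b, ⟨a, ha, b, hb, rfl⟩, embedZ_add a b⟩

/-- the set of integer vectors supported on `j` with value in `K`. -/
def lineSet [DecidableEq ι] (K : Set ℤ) (j : ι) : Set (ι → ℤ) :=
  {c | ∃ k ∈ K, c = Pi.single j k}

set_option linter.unusedSectionVars false

theorem conv_line_subset [DecidableEq ι] (K : Set ℤ) (j : ι) :
    convexHull ℝ (embedZ '' lineSet K j) ⊆
      {v : ι → ℝ | (∀ i, i ≠ j → v i = 0) ∧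
        ∃ k₁ ∈ K, ∃ k₂ ∈ K, (k₁ : ℝ) ≤ v j ∧ v j ≤ (k₂ : ℝ)} := by
  apply convexHull_min
  · rintro v ⟨c, ⟨k, hk, rfl⟩, rfl⟩
    refine ⟨fun i hi => ?_, k, hk, k, hk, ?_, ?_⟩
    · simp [embedZ, Pi.single_apply, hi]
    · simp [embedZ]
    · simp [embedZ]
  · rintro v ⟨hv0, k₁, hk₁, k₂, hk₂, hv₁, hv₂⟩ w ⟨hw0, l₁, hl₁, l₂, hl₂, hw₁, hw₂⟩ a b ha hb hab
    refine ⟨fun i hi => by simp [hv0 i hi, hw0 i hi], min k₁ l₁, ?_, max k₂ l₂, ?_, ?_, ?_⟩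
    · rcases le_total k₁ l₁ with h | h
      · rwa [min_eq_left h]
      · rwa [min_eq_right h]
    · rcases le_total k₂ l₂ with h | h
      · rwa [max_eq_right h]
      · rwa [max_eq_left h]
    · have h1 : ((min k₁ l₁ : ℤ) : ℝ) ≤ v j := le_trans (by exact_mod_cast min_le_left k₁ l₁) hv₁
      have h2 : ((min k₁ l₁ : ℤ) : ℝ) ≤ w j := le_trans (by exact_mod_cast min_le_right k₁ l₁) hw₁
      calc ((min k₁ l₁ : ℤ) : ℝ) = a * (min k₁ l₁ : ℤ) + b * (min k₁ l₁ : ℤ) := by rw [← add_mul, hab, one_mul]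
        _ ≤ a * v j + b * w j := by
            apply add_le_add (mul_le_mul_of_nonneg_left h1 ha) (mul_le_mul_of_nonneg_left h2 hb)
        _ = (a • v + b • w) j := by simp
    · have h1 : v j ≤ ((max k₂ l₂ : ℤ) : ℝ) := le_trans hv₂ (by exact_mod_cast le_max_left k₂ l₂)
      have h2 : w j ≤ ((max k₂ l₂ : ℤ) : ℝ) := le_trans hw₂ (by exact_mod_cast le_max_right k₂ l₂)
      calc (a • v + b • w) j = a * v j + b * w j := by simp
        _ ≤ a * (max k₂ l₂ : ℤ) + b * (max k₂ l₂ : ℤ) :=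
            add_le_add (mul_le_mul_of_nonneg_left h1 ha) (mul_le_mul_of_nonneg_left h2 hb)
        _ = ((max k₂ l₂ : ℤ) : ℝ) := by rw [← add_mul, hab, one_mul]

theorem step_lemma [DecidableEq ι] (S : Set (ι → ℤ)) (K : Set ℤ) (j : ι)
    (hK : ∀ k₁ ∈ K, ∀ k₂ ∈ K, ∀ m : ℤ, k₁ ≤ m → m ≤ k₂ → m ∈ K)
    (hS : IntegrallyConvexSet S) :
    IntegrallyConvexSet (S + lineSet K j) := by
  intro x hx
  rw [embedZ_image_add, convexHull_add] at hx
  obtain ⟨u, hu, v, hv, rfl⟩ := hx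
  obtain ⟨hv0, k₁, hk₁, k₂, hk₂, hvk₁, hvk₂⟩ := conv_line_subset K j hv
  set t : ℝ := v j with ht
  set m : ℤ := ⌊t⌋ with hm
  have hm1 : k₁ ≤ m := Int.le_floor.mpr hvk₁
  have hfr : (m : ℝ) + Int.fract t = t := Int.floor_add_fract t
  have hus : u ∈ convexHull ℝ (embedZ '' (S ∩ IntNbhd u)) := hS u hu
  rcases (lt_or_eq_of_le (Int.fract_nonneg t)).symm with hθ0 | hθpos
  · -- fract t = 0 : pure translation case
    have htm : t = (m : ℝ) := by rw [← hfr, ← hθ0, add_zero]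
    have hmK : m ∈ K := hK k₁ hk₁ k₂ hk₂ m hm1 (by exact_mod_cast htm ▸ hvk₂)
    set c : ι → ℤ := Pi.single j m with hc
    have hvc : v = embedZ c := by
      funext i0
      by_cases hi0 : i0 = j
      · subst hi0; simp [embedZ, hc, ← htm]; exact ht.symm
      · simp [embedZ, hc, hv0 i0 hi0, Pi.single_apply, hi0]
    have hsub : (S ∩ IntNbhd u) + {c} ⊆ (S + lineSet K j) ∩ IntNbhd (u + v) := by
      rintro w ⟨z, hz, c', hc', rfl⟩
      rcases hc' with rfl
      constructor
      · exact ⟨z, hz.1, c, ⟨m, hmK, rfl⟩, rfl⟩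
      · intro i0
        have := hz.2 i0
        have : |(u + v) i0 - ((z + c) i0 : ℝ)| = |u i0 - (z i0 : ℝ)| := by
          rw [hvc]
          simp [embedZ]
        rw [this]
        exact hz.2 i0
    have : u + v ∈ convexHull ℝ (embedZ '' (S ∩ IntNbhd u)) + {embedZ c} := by
      rw [hvc]
      exact Set.add_mem_add hus (Set.mem_singleton (embedZ c))
    rw [← convexHull_singleton (𝕜 := ℝ) (embedZ c), ← convexHull_add, ← Set.image_singleton (f := embedZ),
      ← embedZ_image_add] at this
    exact convexHull_mono (Set.image_mono hsub) this
  · -- fract t > 0 : genuine splitting case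
    set θ : ℝ := Int.fract t with hθ
    have hθ1 : θ < 1 := Int.fract_lt_one t
    have hm2 : m + 1 ≤ k₂ := by
      have : (m : ℝ) < (k₂ : ℝ) := by
        have : (m : ℝ) < t := by linarith
        linarith
      exact_mod_cast this
    have hmK : m ∈ K := hK k₁ hk₁ k₂ hk₂ m hm1 (by omega)
    have hm1K : m + 1 ∈ K := hK k₁ hk₁ k₂ hk₂ (m + 1) (by omega) hm2
    -- representation of u
    rw [convexHull_eq] at hus
    obtain ⟨ι', tset, w, zr, hw0, hw1, hz, hcm⟩ := hus
    have hp : ∀ i ∈ tset, ∃ q : ι → ℤ, q ∈ S ∩ IntNbhd u ∧ embedZ q = zr i := fun i hi => hz i hi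
    choose! p hpmem hpz using hp
    set P : ℤ := ⌊u j⌋ with hP
    set φ : ℝ := Int.fract (u j) with hφ
    have hφ0 : 0 ≤ φ := Int.fract_nonneg _
    have hφ1 : φ < 1 := Int.fract_lt_one _
    have hPφ : (P : ℝ) + φ = u j := Int.floor_add_fract _
    have husum : ∀ i0 : ι, ∑ i ∈ tset, w i * (p i i0 : ℝ) = u i0 := by
      intro i0
      have h1 : tset.centerMass w zr = ∑ i ∈ tset, w i • zr i :=
        Finset.centerMass_eq_of_sum_1 _ _ hw1
      have h2 : (∑ i ∈ tset, w i • zr i) i0 = u i0 := by rw [← h1, hcm]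
      rw [← h2, Finset.sum_apply]
      refine Finset.sum_congr rfl fun i hi => ?_
      rw [← hpz i hi]
      simp [embedZ]
    have hlowhigh : ∀ i ∈ tset, p i j = P ∨ p i j = P + 1 := by
      intro i hi
      have h1 : |u j - (p i j : ℝ)| < 1 := (hpmem i hi).2 j
      rw [abs_lt] at h1
      have hl : (P : ℝ) ≤ u j := Int.floor_le _
      have hu' : u j < (P : ℝ) + 1 := Int.lt_floor_add_one _
      have h2 : (P : ℝ) - 1 < (p i j : ℝ) := by linarith
      have h3 : (p i j : ℝ) < (P : ℝ) + 2 := by linarith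
      have h2' : P - 1 < p i j := by exact_mod_cast h2
      have h3' : p i j < P + 2 := by exact_mod_cast h3
      omega
    -- mass of high points
    set low : Finset ι' := tset.filter (fun i => p i j = P) with hlowdef
    set high : Finset ι' := tset.filter (fun i => ¬ p i j = P) with hhighdef
    have hsplit : ∀ f : ι' → ℝ, ∑ i ∈ tset, f i = ∑ i ∈ low, f i + ∑ i ∈ high, f i := by
      intro f
      exact (Finset.sum_filter_add_sum_filter_not tset _ f).symm
    have hhighval : ∀ i ∈ high, p i j = P + 1 := by
      intro i hi
      rw [hhighdef, Finset.mem_filter] at hi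
      rcases hlowhigh i hi.1 with h | h
      · exact absurd h hi.2
      · exact h
    have hmasshigh : ∑ i ∈ high, w i = φ := by
      have h1 : ∑ i ∈ tset, w i * (p i j : ℝ) = u j := husum j
      rw [hsplit] at h1
      have h2 : ∑ i ∈ low, w i * (p i j : ℝ) = (P : ℝ) * ∑ i ∈ low, w i := by
        rw [Finset.mul_sum]
        refine Finset.sum_congr rfl fun i hi => ?_
        rw [hlowdef, Finset.mem_filter] at hi
        rw [hi.2]; ring
      have h3 : ∑ i ∈ high, w i * (p i j : ℝ) = ((P : ℝ) + 1) * ∑ i ∈ high, w i := by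
        rw [Finset.mul_sum]
        refine Finset.sum_congr rfl fun i hi => ?_
        rw [hhighval i hi]; push_cast; ring
      have h4 : ∑ i ∈ low, w i + ∑ i ∈ high, w i = 1 := by rw [← hsplit]; exact hw1
      rw [h2, h3] at h1
      have h5 : (P : ℝ) * (∑ i ∈ low, w i + ∑ i ∈ high, w i) = (P : ℝ) := by rw [h4, mul_one]
      have h6 : (P : ℝ) * (∑ i ∈ low, w i + ∑ i ∈ high, w i)
          = (P : ℝ) * ∑ i ∈ low, w i + (P : ℝ) * ∑ i ∈ high, w i := by ring
      have h7 : ((P : ℝ) + 1) * ∑ i ∈ high, w i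
          = (P : ℝ) * ∑ i ∈ high, w i + ∑ i ∈ high, w i := by ring
      linarith [h1, h5, h6, h7, hPφ]
    have hmasslow : ∑ i ∈ low, w i = 1 - φ := by
      have h4 : ∑ i ∈ low, w i + ∑ i ∈ high, w i = 1 := by rw [← hsplit]; exact hw1
      linarith [hmasshigh]
    -- ratios
    obtain ⟨rl, rh, hrl0, hrl1, hrh0, hrh1, hmass, hcond1, hcond2⟩ :
        ∃ rl rh : ℝ, 0 ≤ rl ∧ rl ≤ 1 ∧ 0 ≤ rh ∧ rh ≤ 1 ∧
          (1 - φ) * rl + φ * rh = θ ∧ (rl < 1 → φ + θ < 1) ∧ (0 < rh → 1 < φ + θ) := by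
      rcases le_or_gt (φ + θ) 1 with hle | hlt
      · refine ⟨θ / (1 - φ), 0, ?_, ?_, le_rfl, zero_le_one, ?_, ?_, ?_⟩
        · exact div_nonneg hθpos.le (by linarith)
        · rw [div_le_one (by linarith)]; linarith
        · rw [mul_zero, add_zero, mul_comm, div_mul_cancel₀ _ (by linarith : (1:ℝ) - φ ≠ 0)]
        · intro h
          rw [div_lt_one (by linarith)] at h
          linarith
        · intro h; exact absurd h (lt_irrefl 0)
      · have hφpos : 0 < φ := by nlinarith
        refine ⟨1, (θ + φ - 1) / φ, zero_le_one, le_rfl, ?_, ?_, ?_, ?_, fun _ => hlt⟩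
        · exact div_nonneg (by linarith) hφpos.le
        · rw [div_le_one hφpos]; linarith
        · rw [mul_one, mul_div_cancel₀ _ (ne_of_gt hφpos)]; ring
        · intro h; exact absurd h (lt_irrefl 1)
    -- weights and points
    set r : ι' → ℝ := fun i => if p i j = P then rl else rh with hr
    set W : ι' × Bool → ℝ := fun ib => w ib.1 * (if ib.2 then r ib.1 else 1 - r ib.1) with hW
    set Q : ι' × Bool → (ι → ℤ) :=
      fun ib => p ib.1 + Pi.single j (if ib.2 then m + 1 else m) with hQ
    have hr01 : ∀ i, 0 ≤ r i ∧ r i ≤ 1 := by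
      intro i
      rw [hr]
      by_cases h : p i j = P <;> simp [h, hrl0, hrl1, hrh0, hrh1]
    have hW0 : ∀ ib, ib.1 ∈ tset → 0 ≤ W ib := by
      rintro ⟨i, b⟩ hi
      have := hr01 i
      rcases b <;> simp [hW] <;>
        [exact mul_nonneg (hw0 i hi) (by linarith [this.2]);
         exact mul_nonneg (hw0 i hi) this.1]
    have hWpair : ∀ i ∈ tset, W (i, true) + W (i, false) = w i := by
      intro i hi
      simp [hW]
      ring
    have hWtrue : ∑ i ∈ tset, W (i, true) = θ := by
      rw [hsplit]
      have h1 : ∑ i ∈ low, W (i, true) = rl * ∑ i ∈ low, w i := by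
        rw [Finset.mul_sum]
        refine Finset.sum_congr rfl fun i hi => ?_
        rw [hlowdef, Finset.mem_filter] at hi
        simp only [hW, hr, if_pos hi.2, if_pos]
        ring
      have h2 : ∑ i ∈ high, W (i, true) = rh * ∑ i ∈ high, w i := by
        rw [Finset.mul_sum]
        refine Finset.sum_congr rfl fun i hi => ?_
        have := hhighval i hi
        simp only [hW, hr, if_neg (by omega : ¬ p i j = P), if_pos]
        ring
      rw [h1, h2, hmasslow, hmasshigh]
      linarith [hmass]
    have hWfull : ∑ i ∈ tset, (W (i, true) + W (i, false)) = 1 := by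
      rw [Finset.sum_congr rfl hWpair, hw1]
    have hWfalse : ∑ i ∈ tset, W (i, false) = 1 - θ := by
      have := hWfull
      rw [Finset.sum_add_distrib, hWtrue] at this
      linarith
    set F : Finset (ι' × Bool) :=
      (tset ×ˢ (Finset.univ : Finset Bool)).filter (fun ib => W ib ≠ 0) with hF
    have hmemF : ∀ ib ∈ F, ib.1 ∈ tset ∧ W ib ≠ 0 := by
      intro ib hib
      rw [hF, Finset.mem_filter, Finset.mem_product] at hib
      exact ⟨hib.1.1, hib.2⟩
    have hsum2 : ∀ g : ι' × Bool → ℝ, ∑ ib ∈ tset ×ˢ (Finset.univ : Finset Bool), g ib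
        = ∑ i ∈ tset, (g (i, true) + g (i, false)) := by
      intro g
      rw [Finset.sum_product]
      exact Finset.sum_congr rfl fun i _ => by rw [Fintype.sum_bool]
    have hWsumF : ∑ ib ∈ F, W ib = 1 := by
      rw [hF, Finset.sum_filter_ne_zero, hsum2]
      exact hWfull
    have hQcast : ∀ (i : ι') (b : Bool) (i0 : ι),
        ((Q (i, b) i0 : ℤ) : ℝ)
          = (p i i0 : ℝ) + (if i0 = j then (if b then (m : ℝ) + 1 else (m : ℝ)) else 0) := by
      intro i b i0
      simp only [hQ, Pi.add_apply, Pi.single_apply]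
      by_cases hij : i0 = j <;> cases b <;> simp [hij] <;> push_cast <;> ring
    have hxj : (u + v) j = (P : ℝ) + φ + (m : ℝ) + θ := by
      rw [Pi.add_apply, ← hPφ, ← ht, ← hfr]; ring
    have hQmem : ∀ ib ∈ F, embedZ (Q ib) ∈ embedZ '' ((S + lineSet K j) ∩ IntNbhd (u + v)) := by
      rintro ⟨i, b⟩ hib
      obtain ⟨hi, hWne⟩ := hmemF _ hib
      refine ⟨Q (i, b), ⟨?_, ?_⟩, rfl⟩
      · refine ⟨p i, (hpmem i hi).1, Pi.single j (if b then m + 1 else m),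
          ⟨if b then m + 1 else m, ?_, rfl⟩, rfl⟩
        cases b <;> simp [hmK, hm1K]
      · intro i0
        by_cases hij : i0 = j
        · subst hij
          rw [hQcast, if_pos rfl, hxj]
          rcases hlowhigh i hi with hpij | hpij <;> cases b <;>
            simp only [hpij, if_pos, if_neg, Bool.false_eq_true, if_false, if_true] <;>
            push_cast <;> rw [abs_lt] <;> constructor
          · -- low, false : need φ + θ < 1
            linarith
          · have hrlne : r i ≠ 1 := by
              intro hr1
              apply hWne
              simp only [hW, Bool.false_eq_true, if_false, hr1]
              ring
            have hri : r i = rl := by simp only [hr]; rw [if_pos hpij]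
            have : rl < 1 := by
              rcases lt_or_eq_of_le hrl1 with h | h
              · exact h
              · exact absurd (hri.trans h) hrlne
            linarith [hcond1 this]
          · -- low, true : always fine
            linarith
          · linarith
          · -- high, false : always fine
            linarith
          · linarith
          · -- high, true : need 1 < φ + θ
            have hrhne : r i ≠ 0 := by
              intro hr0
              apply hWne
              simp only [hW, if_true, hr0]
              ring
            have hri : r i = rh := by simp only [hr]; rw [if_neg (by omega)]
            have : 0 < rh := by
              rcases lt_or_eq_of_le hrh0 with h | h
              · exact h
              · exact absurd (hri.trans h.symm) hrhne
            linarith [hcond2 this]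
          · linarith
        · rw [hQcast, if_neg hij, add_zero, Pi.add_apply, hv0 i0 hij, add_zero]
          exact (hpmem i hi).2 i0
    have hcmF : F.centerMass W (fun ib => embedZ (Q ib)) = u + v := by
      have hext : ∑ ib ∈ F, W ib • embedZ (Q ib)
          = ∑ ib ∈ tset ×ˢ (Finset.univ : Finset Bool), W ib • embedZ (Q ib) := by
        apply Finset.sum_subset (Finset.filter_subset _ _)
        intro ib hib hnib
        have hWz : W ib = 0 := by
          by_contra hne
          exact hnib (Finset.mem_filter.mpr ⟨hib, hne⟩)
        rw [hWz, zero_smul]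
      rw [Finset.centerMass_eq_of_sum_1 _ _ hWsumF, hext]
      funext i0
      rw [Finset.sum_apply]
      simp only [Pi.smul_apply, smul_eq_mul]
      have hterm : ∀ i ∈ tset, (∑ b : Bool, W (i, b) * (embedZ (Q (i, b)) i0))
          = w i * (p i i0 : ℝ)
            + (if i0 = j then W (i, true) * ((m : ℝ) + 1) + W (i, false) * (m : ℝ) else 0) := by
        intro i hi
        rw [Fintype.sum_bool]
        show W (i, true) * ((Q (i, true) i0 : ℤ) : ℝ)
            + W (i, false) * ((Q (i, false) i0 : ℤ) : ℝ) = _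
        rw [hQcast, hQcast, ← hWpair i hi]
        by_cases hij : i0 = j
        · simp only [hij, if_pos, if_true, Bool.false_eq_true, if_false]
          ring
        · simp only [hij, if_false]
          ring
      rw [Finset.sum_product]
      calc ∑ i ∈ tset, ∑ b : Bool, W (i, b) * (embedZ (Q (i, b)) i0)
          = ∑ i ∈ tset, (w i * (p i i0 : ℝ)
            + (if i0 = j then W (i, true) * ((m : ℝ) + 1) + W (i, false) * (m : ℝ) else 0)) :=
            Finset.sum_congr rfl hterm
        _ = u i0 + (if i0 = j then ((m : ℝ) + 1) * θ + (m : ℝ) * (1 - θ) else 0) := by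
            rw [Finset.sum_add_distrib, husum i0]
            congr 1
            by_cases hij : i0 = j
            · simp only [hij, if_true]
              rw [Finset.sum_add_distrib, ← Finset.sum_mul, ← Finset.sum_mul, hWtrue, hWfalse]
              ring
            · simp [hij]
        _ = (u + v) i0 := by
            by_cases hij : i0 = j
            · subst hij
              rw [if_pos rfl, Pi.add_apply, ← ht, ← hfr]
              ring
            · rw [if_neg hij, add_zero, Pi.add_apply, hv0 i0 hij, add_zero]
    have hres := F.centerMass_mem_convexHull
      (fun ib hib => hW0 ib (hmemF ib hib).1)
      (by rw [hWsumF]; exact one_pos) hQmem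
    rw [hcmF] at hres
    exact hres

def boxOn [DecidableEq ι] (a b : ι → EReal) (F : Finset ι) : Set (ι → ℤ) :=
  {x | (∀ i ∈ F, a i ≤ ((x i : ℝ) : EReal) ∧ ((x i : ℝ) : EReal) ≤ b i) ∧ ∀ i ∉ F, x i = 0}

theorem boxOn_empty [DecidableEq ι] (a b : ι → EReal) : boxOn a b ∅ = ({0} : Set (ι → ℤ)) := by
  ext x
  simp only [boxOn, Set.mem_setOf_eq, Finset.notMem_empty, Set.mem_singleton_iff]
  constructor
  · rintro ⟨-, h⟩
    funext i
    exact h i (by simp)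
  · rintro rfl
    exact ⟨by simp, fun i _ => rfl⟩

theorem boxOn_insert [DecidableEq ι] (a b : ι → EReal) (F : Finset ι) (j : ι) (hj : j ∉ F) :
    boxOn a b (insert j F)
      = boxOn a b F
        + lineSet {k : ℤ | a j ≤ ((k : ℝ) : EReal) ∧ ((k : ℝ) : EReal) ≤ b j} j := by
  ext y
  constructor
  · rintro ⟨h1, h2⟩
    refine ⟨Function.update y j 0, ⟨?_, ?_⟩, Pi.single j (y j), ⟨y j, ?_, rfl⟩, ?_⟩
    · intro i hi
      have hij : i ≠ j := fun h => hj (h ▸ hi)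
      rw [Function.update_of_ne hij]
      exact h1 i (Finset.mem_insert_of_mem hi)
    · intro i hi
      by_cases hij : i = j
      · subst hij; rw [Function.update_self]
      · rw [Function.update_of_ne hij]
        exact h2 i (fun h => hi (Finset.mem_of_mem_insert_of_ne h hij))
    · exact h1 j (Finset.mem_insert_self j F)
    · funext i
      by_cases hij : i = j
      · subst hij
        simp [Function.update_self]
      · simp [Function.update_of_ne hij, Pi.single_apply, hij]
  · rintro ⟨x, ⟨hx1, hx2⟩, c, ⟨k, hk, rfl⟩, rfl⟩
    constructor
    · intro i hi
      rcases Finset.mem_insert.mp hi with rfl | hiF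
      · have : x i = 0 := hx2 i hj
        simp only [Pi.add_apply, this, Pi.single_eq_same, zero_add]
        exact hk
      · have hij : i ≠ j := fun h => hj (h ▸ hiF)
        simp only [Pi.add_apply, Pi.single_apply, if_neg hij, add_zero]
        exact hx1 i hiF
    · intro i hi
      have hij : i ≠ j := fun h => hi (h ▸ Finset.mem_insert_self j F)
      have hiF : i ∉ F := fun h => hi (Finset.mem_insert_of_mem h)
      simp [hx2 i hiF, Pi.single_apply, hij]

theorem boxOn_ic [DecidableEq ι] (S : Set (ι → ℤ)) (hS : IntegrallyConvexSet S)
    (a b : ι → EReal) (F : Finset ι) : IntegrallyConvexSet (S + boxOn a b F) := by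
  classical
  induction F using Finset.induction with
  | empty =>
      rw [boxOn_empty, Set.singleton_zero, add_zero]
      exact hS
  | @insert j F hj ih =>
      rw [boxOn_insert a b F j hj, ← add_assoc]
      apply step_lemma _ _ j _ ih
      rintro k₁ ⟨hk₁a, hk₁b⟩ k₂ ⟨hk₂a, hk₂b⟩ m hm1 hm2
      have hc1 : ((k₁ : ℝ) : EReal) ≤ ((m : ℝ) : EReal) := by
        rw [EReal.coe_le_coe_iff]
        exact_mod_cast hm1
      have hc2 : ((m : ℝ) : EReal) ≤ ((k₂ : ℝ) : EReal) := by
        rw [EReal.coe_le_coe_iff]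
        exact_mod_cast hm2
      exact ⟨le_trans hk₁a hc1, le_trans hc2 hk₂b⟩


/-- The Minkowski sum of an integrally convex set and an integer
interval is integrally convex. -/
theorem minkowski_sum_integrally_convex_box (n : ℕ)
    (S B : Set (Fin n → ℤ)) (hS : IntegrallyConvexSet S)
    (hB : IsIntegerInterval B) :
    IntegrallyConvexSet (S + B) := by
  obtain ⟨a, b, -, -, -, rfl⟩ := hB
  have hbox : {x : Fin n → ℤ | ∀ i, a i ≤ ((x i : ℝ) : EReal) ∧ ((x i : ℝ) : EReal) ≤ b i}
      = boxOn a b Finset.univ := by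
    ext x
    simp [boxOn]
  rw [hbox]
  exact boxOn_ic S hS a b Finset.univ
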